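/- arXiv:0802.2654 — 2 statements merged into one kernel-verified Lean document; each statement's English description precedes it below -/
import Mathlib

section
/- For all n ≥ 0, h₃(2n) = h₃(n) and h₃(4n+1) = 3·h₃(n), where h₃(n) is the number of odd coefficients of (1+x+x^3)^n. -/
open Polynomial

/-- The number of odd coefficients of a polynomial over ℤ. -/
noncomputable def oddCoeffCount (p : Polynomial ℤ) : ℕ :=
  (p.support.filter fun j => Odd (p.coeff j)).card

noncomputable def h3 (n : ℕ) : ℕ := oddCoeffCount ((1 + X + X ^ 3) ^ n)

private lemma odd_count_eq (p : Polynomial ℤ) :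
    oddCoeffCount p = (p.map (Int.castRingHom (ZMod 2))).support.card := by
  unfold oddCoeffCount
  congr 1
  ext j
  rw [Finset.mem_filter, mem_support_iff, mem_support_iff, coeff_map]
  have h : ((p.coeff j : ℤ) : ZMod 2) ≠ 0 ↔ Odd (p.coeff j) := by
    rw [Ne, ZMod.intCast_zmod_eq_zero_iff_dvd, ← Int.not_even_iff_odd, Int.even_iff]
    push_cast
    omega
  simp only [eq_intCast] at h ⊢
  rw [h]
  constructor
  · rintro ⟨-, h2⟩; exact h2
  · intro h2
    refine ⟨?_, h2⟩
    intro hz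
    rw [hz] at h2
    simpa using h2

private lemma supp_add_eq {p q : (ZMod 2)[X]} (h : Disjoint p.support q.support) :
    (p + q).support = p.support ∪ q.support := by
  ext j
  simp only [mem_support_iff, Finset.mem_union, coeff_add]
  have hd : p.coeff j ≠ 0 → ¬ q.coeff j ≠ 0 := by
    intro h1
    have := Finset.disjoint_left.mp h (mem_support_iff.mpr h1)
    simpa [mem_support_iff] using this
  by_cases hp : p.coeff j = 0
  · simp [hp]
  · have hq : q.coeff j = 0 := not_not.mp (hd hp)
    simp [hp, hq]

private lemma support_shift_expand (k : ℕ) (hk : 0 < k) (a : ℕ) (F : (ZMod 2)[X]) :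
    ((expand (ZMod 2) k F) * X ^ a).support = F.support.image (fun j => k * j + a) := by
  ext j
  simp only [mem_support_iff, Finset.mem_image, coeff_mul_X_pow', coeff_expand hk]
  constructor
  · intro h
    by_cases h1 : a ≤ j
    · rw [if_pos h1] at h
      by_cases h2 : k ∣ j - a
      · rw [if_pos h2] at h
        refine ⟨(j - a) / k, h, ?_⟩
        obtain ⟨c, hc⟩ := h2
        rw [hc, Nat.mul_div_cancel_left _ hk]
        omega
      · rw [if_neg h2] at h; simp at h
    · rw [if_neg h1] at h; simp at h
  · rintro ⟨i, hi, rfl⟩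
    have e1 : k * i + a - a = k * i := by omega
    rw [if_pos (by omega : a ≤ k * i + a), e1, if_pos ⟨i, rfl⟩,
      Nat.mul_div_cancel_left _ hk]
    exact hi

private lemma card_shift_expand (k : ℕ) (hk : 0 < k) (a : ℕ) (F : (ZMod 2)[X]) :
    ((expand (ZMod 2) k F) * X ^ a).support.card = F.support.card := by
  rw [support_shift_expand k hk, Finset.card_image_of_injective _ (fun x y hxy => by
    exact Nat.eq_of_mul_eq_mul_left hk (Nat.add_right_cancel hxy))]

private lemma card_expand (k : ℕ) (hk : 0 < k) (F : (ZMod 2)[X]) :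
    (expand (ZMod 2) k F).support.card = F.support.card := by
  have h := card_shift_expand k hk 0 F
  rwa [pow_zero, mul_one] at h

private lemma sq_eq_expand (q : (ZMod 2)[X]) : q ^ 2 = expand (ZMod 2) 2 q := by
  haveI : Fact (Nat.Prime 2) := ⟨by norm_num⟩
  have := Polynomial.map_frobenius_expand 2 q
  rw [ZMod.frobenius_zmod, Polynomial.map_id] at this
  exact this.symm

private lemma h3_eq (n : ℕ) :
    h3 n = (((1 : (ZMod 2)[X]) + X + X ^ 3) ^ n).support.card := by
  rw [h3, odd_count_eq, Polynomial.map_pow]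
  congr 2
  simp

theorem stmt_8 : ∀ n : ℕ, h3 (2 * n) = h3 n ∧ h3 (4 * n + 1) = 3 * h3 n := by
  intro n
  set g : (ZMod 2)[X] := 1 + X + X ^ 3 with hg
  have hexp : ∀ m : ℕ, g ^ (2 * m) = expand (ZMod 2) 2 (g ^ m) := by
    intro m
    rw [mul_comm, pow_mul, sq_eq_expand]
  constructor
  · rw [h3_eq, h3_eq, hexp, card_expand 2 (by norm_num)]
  · rw [h3_eq, h3_eq]
    have e4 : g ^ (4 * n + 1) =
        expand (ZMod 2) 4 (g ^ n) * X ^ 0 + expand (ZMod 2) 4 (g ^ n) * X ^ 1 +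
          expand (ZMod 2) 4 (g ^ n) * X ^ 3 := by
      have h4 : g ^ (4 * n) = expand (ZMod 2) 4 (g ^ n) := by
        rw [show 4 * n = 2 * (2 * n) by ring, hexp, hexp, expand_expand]
      rw [pow_succ, h4, hg]
      ring
    rw [e4]
    have hdis : ∀ a b : ℕ, a < 4 → b < 4 → a ≠ b →
        Disjoint ((expand (ZMod 2) 4 (g ^ n) * X ^ a).support)
          ((expand (ZMod 2) 4 (g ^ n) * X ^ b).support) := by
      intro a b ha hb hab
      rw [support_shift_expand 4 (by norm_num), support_shift_expand 4 (by norm_num),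
        Finset.disjoint_left]
      rintro x hx hx'
      simp only [Finset.mem_image] at hx hx'
      obtain ⟨i, -, hi⟩ := hx
      obtain ⟨j, -, hj⟩ := hx'
      omega
    have d01 := hdis 0 1 (by norm_num) (by norm_num) (by norm_num)
    have d03 := hdis 0 3 (by norm_num) (by norm_num) (by norm_num)
    have d13 := hdis 1 3 (by norm_num) (by norm_num) (by norm_num)
    have dU : Disjoint ((expand (ZMod 2) 4 (g ^ n) * X ^ 0).support ∪
        (expand (ZMod 2) 4 (g ^ n) * X ^ 1).support)
        ((expand (ZMod 2) 4 (g ^ n) * X ^ 3).support) :=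
      Finset.disjoint_union_left.mpr ⟨d03, d13⟩
    rw [supp_add_eq (by rw [supp_add_eq d01]; exact dU), supp_add_eq d01,
      Finset.card_union_of_disjoint dU,
      Finset.card_union_of_disjoint d01,
      card_shift_expand 4 (by norm_num), card_shift_expand 4 (by norm_num),
      card_shift_expand 4 (by norm_num)]
    ring
end

section
/- limsup over n of ln(v(n))/ln(n) equals ln(φ)/ln(2), where v is Stern's diatomic sequence and φ = (1+√5)/2. -/
open Filter Real goldenRatio

/-- Golden-ratio power bounds on Fibonacci numbers. -/
lemma aux_fib_gold (n : ℕ) :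
    ((Nat.fib (n + 1) : ℝ) ≤ goldenRatio ^ n ∧ goldenRatio ^ n ≤ (Nat.fib (n + 2) : ℝ)) ∧
    ((Nat.fib (n + 2) : ℝ) ≤ goldenRatio ^ (n + 1) ∧
      goldenRatio ^ (n + 1) ≤ (Nat.fib (n + 3) : ℝ)) := by
  have key : ∀ m : ℕ, goldenRatio ^ (m + 2) = goldenRatio ^ (m + 1) + goldenRatio ^ m := by
    intro m; rw [pow_add, goldenRatio_sq]; ring
  induction n with
  | zero =>
    have f1 : Nat.fib 1 = 1 := by decide
    have f2 : Nat.fib 2 = 1 := by decide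
    have f3 : Nat.fib 3 = 2 := by decide
    refine ⟨⟨?_, ?_⟩, ?_, ?_⟩
    · show (Nat.fib 1 : ℝ) ≤ goldenRatio ^ 0
      rw [f1]; norm_num
    · show (goldenRatio : ℝ) ^ 0 ≤ (Nat.fib 2 : ℝ)
      rw [f2]; norm_num
    · show (Nat.fib 2 : ℝ) ≤ goldenRatio ^ 1
      rw [f2, pow_one]; push_cast; exact one_lt_goldenRatio.le
    · show (goldenRatio : ℝ) ^ 1 ≤ (Nat.fib 3 : ℝ)
      rw [f3, pow_one]; push_cast; exact goldenRatio_lt_two.le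
  | succ n ih =>
    obtain ⟨⟨h11, h12⟩, h21, h22⟩ := ih
    refine ⟨⟨h21, h22⟩, ?_, ?_⟩
    · show (Nat.fib (n + 3) : ℝ) ≤ goldenRatio ^ (n + 2)
      have e : (Nat.fib (n + 3) : ℝ) = (Nat.fib (n + 1) : ℝ) + (Nat.fib (n + 2) : ℝ) := by
        exact_mod_cast congrArg (Nat.cast : ℕ → ℝ) (Nat.fib_add_two (n := n + 1))
      rw [e, key n]
      linarith
    · show goldenRatio ^ (n + 2) ≤ (Nat.fib (n + 4) : ℝ)
      have e : (Nat.fib (n + 4) : ℝ) = (Nat.fib (n + 2) : ℝ) + (Nat.fib (n + 3) : ℝ) := by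
        exact_mod_cast congrArg (Nat.cast : ℕ → ℝ) (Nat.fib_add_two (n := n + 2))
      rw [e, key n]
      linarith

/-- Indices where Stern's sequence attains Fibonacci values. -/
def sternM : ℕ → ℕ
  | 0 => 2
  | (j + 1) => if Even j then 2 * sternM j else 2 * sternM j + 2

lemma sternM_ge (j : ℕ) : 2 ^ (j + 1) ≤ sternM j := by
  induction j with
  | zero => simp [sternM]
  | succ j ih =>
    have h : 2 ^ (j + 2) ≤ 2 * sternM j := by
      calc 2 ^ (j + 2) = 2 * 2 ^ (j + 1) := by ring
        _ ≤ 2 * sternM j := by exact Nat.mul_le_mul_left 2 ih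
    show 2 ^ (j + 2) ≤ sternM (j + 1)
    unfold sternM
    split <;> omega

lemma sternM_le (j : ℕ) : sternM j ≤ 2 ^ (j + 2) := by
  have H : ∀ j, sternM j + 2 ≤ 2 ^ (j + 2) := by
    intro j
    induction j with
    | zero => simp [sternM]
    | succ j ih =>
      have h : 2 ^ (j + 3) = 2 * 2 ^ (j + 2) := by ring
      show sternM (j + 1) + 2 ≤ 2 ^ (j + 3)
      unfold sternM
      split <;> omega
  have := H j; omega

theorem stmt_16 (v : ℕ → ℕ) (h0 : v 0 = 1)
    (hodd : ∀ n : ℕ, v (2 * n + 1) = v n)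
    (heven : ∀ n : ℕ, 1 ≤ n → v (2 * n) = v n + v (n - 1)) :
    Filter.limsup (fun n : ℕ => Real.log (v n) / Real.log n) Filter.atTop =
      Real.log ((1 + Real.sqrt 5) / 2) / Real.log 2 := by
  have hv1 : v 1 = 1 := by have := hodd 0; simpa [h0] using this
  -- positivity of v
  have hvpos : ∀ n, 1 ≤ v n := by
    intro n
    induction n using Nat.strong_induction_on with
    | _ n ih =>
      rcases Nat.even_or_odd n with ⟨m, hm⟩ | ⟨m, hm⟩
      · rcases Nat.eq_zero_or_pos m with rfl | hm1
        · simp [hm, h0]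
        · have : n = 2 * m := by omega
          rw [this, heven m hm1]
          have := ih m (by omega)
          omega
      · have : n = 2 * m + 1 := by omega
        rw [this, hodd m]
        exact ih m (by omega)
  -- Fibonacci upper bound, by induction on the binary length
  have hvle : ∀ k, ∀ n, n < 2 ^ k →
      v n ≤ Nat.fib (k + 2) ∧ v n + v (n + 1) ≤ Nat.fib (k + 3) := by
    intro k
    induction k with
    | zero =>
      intro n hn
      have hn0 : n = 0 := by simpa [Nat.lt_one_iff] using hn
      subst hn0
      have f2 : Nat.fib 2 = 1 := by decide
      have f3 : Nat.fib 3 = 2 := by decide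
      constructor
      · rw [h0, f2]
      · show v 0 + v 1 ≤ Nat.fib 3
        rw [h0, hv1, f3]
    | succ k ih =>
      intro n hn
      rcases Nat.even_or_odd n with ⟨m, hm⟩ | ⟨m, hm⟩
      · -- n = 2m
        have hn2 : n = 2 * m := by omega
        rcases Nat.eq_zero_or_pos m with rfl | hm1
        · subst hn2
          have f1 : 2 ≤ Nat.fib (k + 3) := by
            calc 2 = Nat.fib 3 := by decide
              _ ≤ Nat.fib (k + 3) := Nat.fib_mono (by omega)
          have f2 : 2 ≤ Nat.fib (k + 4) := by
            calc 2 = Nat.fib 3 := by decide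
              _ ≤ Nat.fib (k + 4) := Nat.fib_mono (by omega)
          constructor
          · show v 0 ≤ Nat.fib (k + 3)
            rw [h0]; omega
          · show v 0 + v 1 ≤ Nat.fib (k + 4)
            rw [h0, hv1]; omega
        · have hmlt : m < 2 ^ k := by
            have : 2 * m < 2 ^ (k + 1) := by omega
            have h2 : 2 ^ (k + 1) = 2 * 2 ^ k := by ring
            omega
          have hm1lt : m - 1 < 2 ^ k := by omega
          obtain ⟨g1, g2⟩ := ih (m - 1) hm1lt
          obtain ⟨q1, _⟩ := ih m hmlt
          have hm1e : m - 1 + 1 = m := by omega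
          rw [hm1e] at g2
          have hvn : v n = v m + v (m - 1) := by rw [hn2]; exact heven m hm1
          have hvn1 : v (n + 1) = v m := by
            have : n + 1 = 2 * m + 1 := by omega
            rw [this, hodd]
          have fadd : Nat.fib (k + 4) = Nat.fib (k + 3) + Nat.fib (k + 2) := by
            rw [show k + 4 = (k + 2) + 2 by ring, Nat.fib_add_two]; ring
          constructor
          · show v n ≤ Nat.fib (k + 3)
            omega
          · show v n + v (n + 1) ≤ Nat.fib (k + 4)
            omega
      · -- n = 2m+1
        have hn2 : n = 2 * m + 1 := by omega
        have hmlt : m < 2 ^ k := by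
          have h2 : 2 ^ (k + 1) = 2 * 2 ^ k := by ring
          omega
        obtain ⟨q1, q2⟩ := ih m hmlt
        have hvn : v n = v m := by rw [hn2, hodd]
        have hvn1 : v (n + 1) = v (m + 1) + v m := by
          have e : n + 1 = 2 * (m + 1) := by omega
          rw [e, heven (m + 1) (by omega)]
          simp
        have fle : Nat.fib (k + 2) ≤ Nat.fib (k + 3) := Nat.fib_mono (by omega)
        have fadd : Nat.fib (k + 4) = Nat.fib (k + 3) + Nat.fib (k + 2) := by
          rw [show k + 4 = (k + 2) + 2 by ring, Nat.fib_add_two]; ring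
        constructor
        · show v n ≤ Nat.fib (k + 3)
          omega
        · show v n + v (n + 1) ≤ Nat.fib (k + 4)
          omega
  -- the values along sternM
  have hspec : ∀ j, v (sternM j) = Nat.fib (j + 3) ∧
      (if Even j then v (sternM j - 1) = Nat.fib (j + 2)
       else v (sternM j + 1) = Nat.fib (j + 2)) := by
    intro j
    induction j with
    | zero =>
      constructor
      · show v 2 = Nat.fib 3
        have : v 2 = v 1 + v 0 := by
          have := heven 1 (by omega); simpa using this
        rw [this, hv1, h0]; decide
      · simp [sternM, hv1]
    | succ j ih =>
      obtain ⟨ih1, ih2⟩ := ih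
      have hge := sternM_ge j
      have hpos : 1 ≤ sternM j := by
        have : 1 ≤ 2 ^ (j + 1) := Nat.one_le_two_pow
        omega
      have hge2 : 2 ≤ sternM j := by
        have : 2 ≤ 2 ^ (j + 1) := by
          calc 2 = 2 ^ 1 := rfl
            _ ≤ 2 ^ (j + 1) := Nat.pow_le_pow_right (by omega) (by omega)
        omega
      have fadd : Nat.fib (j + 4) = Nat.fib (j + 3) + Nat.fib (j + 2) := by
        rw [show j + 4 = (j + 2) + 2 by ring, Nat.fib_add_two]; ring
      by_cases hj : Even j
      · -- A → B : sternM (j+1) = 2 * sternM j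
        rw [if_pos hj] at ih2
        have hM : sternM (j + 1) = 2 * sternM j := by
          show (if Even j then 2 * sternM j else 2 * sternM j + 2) = _
          rw [if_pos hj]
        have hnotev : ¬ Even (j + 1) := by simp [Nat.even_add_one, hj]
        constructor
        · rw [hM, heven (sternM j) hpos, ih1, ih2, fadd]
        · rw [if_neg hnotev, hM]
          have : 2 * sternM j + 1 = 2 * sternM j + 1 := rfl
          rw [hodd (sternM j), ih1]
      · -- B → A : sternM (j+1) = 2 * sternM j + 2
        rw [if_neg hj] at ih2
        have hM : sternM (j + 1) = 2 * sternM j + 2 := by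
          show (if Even j then 2 * sternM j else 2 * sternM j + 2) = _
          rw [if_neg hj]
        have hev : Even (j + 1) := by simp [Nat.even_add_one, hj]
        constructor
        · have e : 2 * sternM j + 2 = 2 * (sternM j + 1) := by ring
          rw [hM, e, heven (sternM j + 1) (by omega)]
          simp only [Nat.add_sub_cancel]
          rw [ih1, ih2, fadd]; ring
        · rw [if_pos hev, hM]
          have e : 2 * sternM j + 2 - 1 = 2 * sternM j + 1 := by omega
          rw [e, hodd (sternM j), ih1]
  -- basic positivity facts
  have hl2 : (0:ℝ) < Real.log 2 := Real.log_pos one_lt_two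
  have hlφ : (0:ℝ) < Real.log goldenRatio := Real.log_pos one_lt_goldenRatio
  set L : ℝ := Real.log goldenRatio / Real.log 2 with hL
  have hLpos : 0 < L := div_pos hlφ hl2
  set f : ℕ → ℝ := fun n : ℕ => Real.log (v n) / Real.log n with hf
  -- the eventual upper bound
  have hupper : ∀ ε : ℝ, 0 < ε → ∀ᶠ n in atTop, f n ≤ L + ε := by
    intro ε hε
    set K : ℕ := ⌈2 * L / ε⌉₊ + 1 with hK
    filter_upwards [eventually_ge_atTop (2 ^ K)] with n hn
    have hn0 : n ≠ 0 := by
      have : 1 ≤ 2 ^ K := Nat.one_le_two_pow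
      omega
    set k : ℕ := Nat.log 2 n with hk
    have hkK : K ≤ k := (Nat.le_log_iff_pow_le one_lt_two hn0).mpr hn
    have hk1 : 1 ≤ k := by omega
    have hnlt : n < 2 ^ (k + 1) := Nat.lt_pow_succ_log_self one_lt_two n
    have hnge : 2 ^ k ≤ n := Nat.pow_log_le_self 2 hn0
    have hvb : v n ≤ Nat.fib (k + 3) := (hvle (k + 1) n hnlt).1
    -- numerator bound
    have hnum : Real.log (v n) ≤ (k + 2) * Real.log goldenRatio := by
      have h1 : (v n : ℝ) ≤ goldenRatio ^ (k + 2) := by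
        calc (v n : ℝ) ≤ (Nat.fib (k + 3) : ℝ) := by exact_mod_cast hvb
          _ ≤ goldenRatio ^ (k + 2) := by
              exact (aux_fib_gold (k + 1)).2.1
      calc Real.log (v n) ≤ Real.log (goldenRatio ^ (k + 2)) := by
            apply Real.log_le_log _ h1
            exact_mod_cast hvpos n
        _ = (k + 2) * Real.log goldenRatio := by
            rw [Real.log_pow]; push_cast; ring
    -- denominator bound
    have hden : (k : ℝ) * Real.log 2 ≤ Real.log n := by
      calc (k : ℝ) * Real.log 2 = Real.log ((2 : ℝ) ^ k) := by rw [Real.log_pow]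
        _ ≤ Real.log n := by
            apply Real.log_le_log (by positivity)
            exact_mod_cast hnge
    have hdenpos : (0:ℝ) < (k : ℝ) * Real.log 2 := by
      apply mul_pos _ hl2
      exact_mod_cast hk1
    have hnumnn : (0:ℝ) ≤ (k + 2) * Real.log goldenRatio := by positivity
    have step1 : f n ≤ ((k : ℝ) + 2) * Real.log goldenRatio / ((k : ℝ) * Real.log 2) :=
      div_le_div₀ hnumnn hnum hdenpos hden
    -- arithmetic
    have hKge : 2 * L / ε ≤ (k : ℝ) := by
      calc 2 * L / ε ≤ (⌈2 * L / ε⌉₊ : ℝ) := Nat.le_ceil _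
        _ ≤ (k : ℝ) := by exact_mod_cast le_trans (by omega) hkK
    have h2L : 2 * L ≤ ε * k := by
      rw [div_le_iff₀ hε] at hKge
      linarith
    have step2 : ((k : ℝ) + 2) * Real.log goldenRatio / ((k : ℝ) * Real.log 2) ≤ L + ε := by
      rw [div_le_iff₀ hdenpos]
      have hLdef : L * Real.log 2 = Real.log goldenRatio := by
        rw [hL]; field_simp
      have hkr : (1:ℝ) ≤ (k : ℝ) := by exact_mod_cast hk1
      nlinarith [h2L, hl2, hlφ]
    exact step1.trans step2
  have hbdd : IsBoundedUnder (· ≤ ·) atTop f := ⟨L + 1, hupper 1 one_pos⟩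
  have hcobdd : IsCoboundedUnder (· ≤ ·) atTop f :=
    Filter.isCoboundedUnder_le_of_le atTop fun n =>
      div_nonneg (Real.log_natCast_nonneg _) (Real.log_natCast_nonneg _)
  -- the frequent lower bound
  have hlow : ∀ ε : ℝ, 0 < ε → ∃ᶠ n in atTop, L - ε ≤ f n := by
    intro ε hε
    have htend : Tendsto sternM atTop atTop := by
      apply tendsto_atTop_mono _ tendsto_id
      intro j
      calc (id j : ℕ) = j := rfl
        _ ≤ 2 ^ (j + 1) := le_of_lt (by
            calc j < 2 ^ j := Nat.lt_two_pow_self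
              _ ≤ 2 ^ (j + 1) := Nat.pow_le_pow_right (by omega) (by omega))
        _ ≤ sternM j := sternM_ge j
    apply htend.frequently
    apply Eventually.frequently
    filter_upwards [eventually_ge_atTop ⌈L / ε⌉₊] with j hj
    have hMv : v (sternM j) = Nat.fib (j + 3) := (hspec j).1
    have hge2 : 2 ≤ sternM j := by
      have h1 := sternM_ge j
      have : 2 ≤ 2 ^ (j + 1) := by
        calc 2 = 2 ^ 1 := rfl
          _ ≤ 2 ^ (j + 1) := Nat.pow_le_pow_right (by omega) (by omega)
      omega
    -- numerator lower bound
    have hnum : ((j : ℝ) + 1) * Real.log goldenRatio ≤ Real.log (v (sternM j)) := by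
      rw [hMv]
      have h1 : goldenRatio ^ (j + 1) ≤ (Nat.fib (j + 3) : ℝ) := by
        exact (aux_fib_gold (j + 1)).1.2
      calc ((j : ℝ) + 1) * Real.log goldenRatio = Real.log (goldenRatio ^ (j + 1)) := by
            rw [Real.log_pow]; push_cast; ring
        _ ≤ Real.log (Nat.fib (j + 3)) := Real.log_le_log (by positivity) h1
    -- denominator upper bound
    have hden : Real.log (sternM j) ≤ ((j : ℝ) + 2) * Real.log 2 := by
      calc Real.log (sternM j) ≤ Real.log ((2:ℝ) ^ (j + 2)) := by
            apply Real.log_le_log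
            · exact_mod_cast lt_of_lt_of_le (by norm_num) hge2
            · exact_mod_cast sternM_le j
        _ = ((j : ℝ) + 2) * Real.log 2 := by rw [Real.log_pow]; push_cast; ring
    have hdenpos : (0:ℝ) < Real.log (sternM j) := by
      apply Real.log_pos
      exact_mod_cast lt_of_lt_of_le (by norm_num) hge2
    have hnumnn : (0:ℝ) ≤ Real.log (v (sternM j)) := by
      apply Real.log_nonneg
      exact_mod_cast hvpos (sternM j)
    have step1 : ((j : ℝ) + 1) * Real.log goldenRatio / (((j : ℝ) + 2) * Real.log 2)
        ≤ f (sternM j) :=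
      div_le_div₀ hnumnn hnum hdenpos hden
    have hjge : L / ε ≤ (j : ℝ) := by
      calc L / ε ≤ (⌈L / ε⌉₊ : ℝ) := Nat.le_ceil _
        _ ≤ (j : ℝ) := by exact_mod_cast hj
    have hLj : L ≤ ε * ((j : ℝ) + 2) := by
      rw [div_le_iff₀ hε] at hjge
      have : (0:ℝ) ≤ ε * 2 := by positivity
      linarith
    have step2 : L - ε ≤ ((j : ℝ) + 1) * Real.log goldenRatio / (((j : ℝ) + 2) * Real.log 2) := by
      have hdpos : (0:ℝ) < ((j : ℝ) + 2) * Real.log 2 := by positivity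
      rw [le_div_iff₀ hdpos]
      have hLdef : L * Real.log 2 = Real.log goldenRatio := by
        rw [hL]; field_simp
      nlinarith [mul_nonneg (sub_nonneg.mpr hLj) hl2.le]
    exact le_trans step2 step1
  -- conclude
  have h1 : Filter.limsup f atTop ≤ L := by
    apply le_of_forall_pos_le_add
    intro ε hε
    exact Filter.limsup_le_of_le hcobdd (hupper ε hε)
  have h2 : L ≤ Filter.limsup f atTop := by
    apply le_of_forall_pos_le_add
    intro ε hε
    have := Filter.le_limsup_of_frequently_le (hlow ε hε) hbdd
    linarith
  have : Filter.limsup f atTop = L := le_antisymm h1 h2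
  rw [hf] at this
  rw [this, hL]
end
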